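/- Let W₁,…,W_n be independent real random variables satisfying max_{i=1,…,n} K² · E{e^{W_i²/K²} − 1} ≤ σ₀² for some K, σ₀ > 0. Then P{ (1/n) ∑_{i=1}^n W_i² > 2σ₀² } ≤ exp( − n · σ₀² / K² ). -/

import Mathlib

open MeasureTheory ProbabilityTheory

/-- Let `W₁, …, W_n` be independent real random variables satisfying the sub-Gaussian condition
`max_i K² E{exp(W_i²/K²) − 1} ≤ σ₀²` for some `K, σ₀ > 0`.  Then
`P{(1/n) ∑ᵢ W_i² > 2σ₀²} ≤ exp(−n σ₀² / K²)`. -/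
theorem sum_sq_subgaussian_tail_bound
    {Ω : Type*} [MeasureSpace Ω] [IsProbabilityMeasure (ℙ : Measure Ω)]
    {n : ℕ} (hn : 0 < n) (W : Fin n → Ω → ℝ)
    (hWmeas : ∀ i, Measurable (W i))
    (hWindep : iIndepFun W ℙ)
    (K σ₀ : ℝ) (hK : 0 < K) (hσ₀ : 0 < σ₀)
    (hint : ∀ i, Integrable (fun ω => Real.exp ((W i ω) ^ 2 / K ^ 2)) ℙ)
    (hsub : ∀ i, K ^ 2 * ((∫ ω, Real.exp ((W i ω) ^ 2 / K ^ 2)) - 1) ≤ σ₀ ^ 2) :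
    (ℙ {ω | 2 * σ₀ ^ 2 < (∑ i, (W i ω) ^ 2) / n}).toReal ≤
      Real.exp (-(n * σ₀ ^ 2) / K ^ 2) := by
  have hK2 : (0:ℝ) < K ^ 2 := by positivity
  set X : Fin n → Ω → ℝ := fun i ω => (W i ω) ^ 2 with hX
  set t : ℝ := 1 / K ^ 2 with ht
  have htpos : 0 < t := by positivity
  have hXmeas : ∀ i, Measurable (X i) := fun i => (hWmeas i).pow_const 2
  have hXindep : iIndepFun X ℙ :=
    hWindep.comp (fun i => fun x : ℝ => x ^ 2) (fun i => measurable_id.pow_const 2)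
  have hintX : ∀ i, Integrable (fun ω => Real.exp (t * X i ω)) ℙ := by
    intro i
    have := hint i
    simpa [ht, hX, div_eq_mul_inv, mul_comm] using this
  have hintS : Integrable (fun ω => Real.exp (t * (∑ i, X i) ω)) ℙ :=
    hXindep.integrable_exp_mul_sum hXmeas (fun i _ => hintX i)
  -- event inclusion
  have hsubset : {ω | 2 * σ₀ ^ 2 < (∑ i, (W i ω) ^ 2) / n} ⊆
      {ω | 2 * ↑n * σ₀ ^ 2 ≤ (∑ i, X i) ω} := by
    intro ω hω
    simp only [Set.mem_setOf_eq] at hω ⊢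
    have hn' : (0:ℝ) < n := by exact_mod_cast hn
    have h2 : 2 * σ₀ ^ 2 * n < ∑ i, (W i ω) ^ 2 := (lt_div_iff₀ hn').mp hω
    simp only [Finset.sum_apply, hX]
    nlinarith
  have hmono : (ℙ {ω | 2 * σ₀ ^ 2 < (∑ i, (W i ω) ^ 2) / n}).toReal ≤
      (ℙ {ω | 2 * ↑n * σ₀ ^ 2 ≤ (∑ i, X i) ω}).toReal :=
    ENNReal.toReal_mono (measure_ne_top _ _) (measure_mono hsubset)
  have hchernoff := measure_ge_le_exp_mul_mgf (X := ∑ i, X i) (μ := ℙ)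
    (2 * ↑n * σ₀ ^ 2) htpos.le hintS
  have hmgf : mgf (∑ i, X i) ℙ t = ∏ i, mgf (X i) ℙ t :=
    hXindep.mgf_sum hXmeas Finset.univ
  have hfac : ∀ i, mgf (X i) ℙ t ≤ Real.exp (σ₀ ^ 2 / K ^ 2) := by
    intro i
    have h1 : mgf (X i) ℙ t = ∫ ω, Real.exp ((W i ω) ^ 2 / K ^ 2) := by
      unfold mgf
      congr 1
      ext ω
      rw [ht, hX]
      ring_nf
    have h2 : (∫ ω, Real.exp ((W i ω) ^ 2 / K ^ 2)) ≤ 1 + σ₀ ^ 2 / K ^ 2 := by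
      have hs := hsub i
      rw [← sub_le_iff_le_add', le_div_iff₀ hK2]
      linarith [hsub i]
    calc mgf (X i) ℙ t ≤ 1 + σ₀ ^ 2 / K ^ 2 := h1 ▸ h2
      _ ≤ Real.exp (σ₀ ^ 2 / K ^ 2) := by
          have := Real.add_one_le_exp (σ₀ ^ 2 / K ^ 2); linarith
  have hprod : ∏ i, mgf (X i) ℙ t ≤ Real.exp (↑n * (σ₀ ^ 2 / K ^ 2)) := by
    calc ∏ i, mgf (X i) ℙ t ≤ ∏ _i : Fin n, Real.exp (σ₀ ^ 2 / K ^ 2) :=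
          Finset.prod_le_prod (fun i _ => mgf_nonneg) (fun i _ => hfac i)
      _ = Real.exp (↑n * (σ₀ ^ 2 / K ^ 2)) := by
          rw [Finset.prod_const, ← Real.exp_nat_mul]; simp
  calc (ℙ {ω | 2 * σ₀ ^ 2 < (∑ i, (W i ω) ^ 2) / n}).toReal
      ≤ Real.exp (-t * (2 * ↑n * σ₀ ^ 2)) * mgf (∑ i, X i) ℙ t := hmono.trans hchernoff
    _ ≤ Real.exp (-t * (2 * ↑n * σ₀ ^ 2)) * Real.exp (↑n * (σ₀ ^ 2 / K ^ 2)) := by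
        have h0 : 0 ≤ Real.exp (-t * (2 * ↑n * σ₀ ^ 2)) := (Real.exp_pos _).le
        exact mul_le_mul_of_nonneg_left (hmgf ▸ hprod) h0
    _ = Real.exp (-(↑n * σ₀ ^ 2) / K ^ 2) := by
        rw [← Real.exp_add]
        congr 1
        field_simp [ht]
        rw [ht]; linear_combination (-2) * one_div_mul_cancel hK2.ne'
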